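/- The Dirichlet-multinomial marginal likelihood (Γ(α)/Γ(α+N)) · ∏_j Γ(φ_j α + n_j)/Γ(φ_j α) can be rewritten, using the Stirling-number identity, as a sum over pseudo-count vectors (t_1,...,t_k) with 1 ≤ t_j ≤ n_j whenever n_j > 0 (and t_j = 0 when n_j = 0) of (α^{T}/α^{(N)}) · ∏_j φ_j^{t_j} S(n_j, t_j), where T = Σ_j t_j, N = Σ_j n_j, and α^{(N)} is the rising factorial. -/

import Mathlib

/-- Unsigned Stirling numbers of the first kind. -/
def stirling1 : ℕ → ℕ → ℕ
  | 0, 0 => 1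
  | 0, _ + 1 => 0
  | _ + 1, 0 => 0
  | n + 1, t + 1 => n * stirling1 n (t + 1) + stirling1 n t

lemma stirling1_eq_zero_of_lt : ∀ n t, n < t → stirling1 n t = 0 := by
  intro n
  induction n with
  | zero => intro t ht; cases t with
    | zero => omega
    | succ t => rfl
  | succ m ih =>
    intro t ht
    cases t with
    | zero => omega
    | succ t =>
      show m * stirling1 m (t + 1) + stirling1 m t = 0
      rw [ih (t+1) (by omega), ih t (by omega)]
      ring

lemma gamma_ratio (x : ℝ) (hx : 0 < x) (n : ℕ) :
    Real.Gamma (x + n) / Real.Gamma x = ∏ i ∈ Finset.range n, (x + i) := by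
  induction n with
  | zero => simp [div_self (ne_of_gt (Real.Gamma_pos_of_pos hx))]
  | succ m ih =>
    have hxm : (x + m) ≠ 0 := by positivity
    have : Real.Gamma (x + (m+1 : ℕ)) = (x + m) * Real.Gamma (x + m) := by
      push_cast
      rw [show x + ((m : ℝ) + 1) = (x + m) + 1 by ring, Real.Gamma_add_one hxm]
    rw [this, Finset.prod_range_succ, mul_div_assoc, ih]
    ring

lemma asc_eq_sum (x : ℝ) (n : ℕ) :
    ∏ i ∈ Finset.range n, (x + i) =
      ∑ t ∈ Finset.range (n + 1), (stirling1 n t : ℝ) * x ^ t := by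
  induction n with
  | zero => simp [stirling1]
  | succ m ih =>
    set A := ∑ t ∈ Finset.range (m + 1), (stirling1 m t : ℝ) * x ^ t with hA
    have hshift : ∑ t ∈ Finset.range (m + 1), (stirling1 m (t+1) : ℝ) * x ^ (t+1)
        = A - (stirling1 m 0 : ℝ) := by
      have h1 := Finset.sum_range_succ' (fun t => (stirling1 m t : ℝ) * x ^ t) (m+1)
      have h2 : ∑ t ∈ Finset.range (m + 2), (stirling1 m t : ℝ) * x ^ t = A := by
        rw [Finset.sum_range_succ, stirling1_eq_zero_of_lt m (m+1) (by omega)]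
        simp [hA]
      rw [h2] at h1
      simp only [pow_zero, mul_one] at h1
      linarith
    have hm0 : (m : ℝ) * (stirling1 m 0 : ℝ) = 0 := by
      cases m with
      | zero => simp
      | succ p => simp [stirling1]
    rw [Finset.prod_range_succ, ih]
    rw [Finset.sum_range_succ' (fun t => (stirling1 (m+1) t : ℝ) * x ^ t) (m+1)]
    have h0 : (stirling1 (m+1) 0 : ℝ) = 0 := by simp [stirling1]
    rw [h0]
    have hterm : ∀ t ∈ Finset.range (m+1),
        (stirling1 (m+1) (t+1) : ℝ) * x ^ (t+1)
          = (m : ℝ) * ((stirling1 m (t+1) : ℝ) * x ^ (t+1))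
            + x * ((stirling1 m t : ℝ) * x ^ t) := by
      intro t _
      show ((m * stirling1 m (t + 1) + stirling1 m t : ℕ) : ℝ) * x ^ (t+1) = _
      push_cast
      ring
    rw [Finset.sum_congr rfl hterm, Finset.sum_add_distrib, ← Finset.mul_sum,
      ← Finset.mul_sum, hshift]
    simp only [zero_mul, add_zero]
    have : (m:ℝ) * (A - (stirling1 m 0 : ℝ)) = m * A := by rw [mul_sub, hm0]; ring
    rw [this]
    ring

open Finset in
/-- The Dirichlet-multinomial marginal likelihood rewritten, via the Stirling-number
identity, as a sum over pseudo-count vectors `t` with `1 ≤ t_j ≤ n_j` when `n_j > 0` and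
`t_j = 0` when `n_j = 0`. -/
theorem stmt_4 (k : ℕ) (α : ℝ) (hα : 0 < α) (φ : Fin k → ℝ)
    (hφ : ∀ j, 0 < φ j) (hφ1 : ∑ j, φ j = 1) (n : Fin k → ℕ) :
    (Real.Gamma α / Real.Gamma (α + (∑ j, n j : ℕ))) *
        ∏ j, (Real.Gamma (φ j * α + n j) / Real.Gamma (φ j * α)) =
      ∑ t ∈ Finset.univ.filter
          (fun t : (j : Fin k) → Fin (n j + 1) =>
            ∀ j, if n j = 0 then (t j : ℕ) = 0 else 1 ≤ (t j : ℕ)),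
        (α ^ (∑ j, (t j : ℕ)) / ∏ i ∈ Finset.range (∑ j, n j), (α + i)) *
          ∏ j, φ j ^ (t j : ℕ) * (stirling1 (n j) (t j) : ℝ) := by
  set N := ∑ j, n j with hN
  have hP : ∀ i : ℕ, (0:ℝ) < α + i := fun i => by positivity
  have hprodpos : (0:ℝ) < ∏ i ∈ Finset.range N, (α + i) :=
    Finset.prod_pos (fun i _ => hP i)
  have h1 : Real.Gamma α / Real.Gamma (α + (N : ℕ)) =
      (∏ i ∈ Finset.range N, (α + i))⁻¹ := by
    rw [← gamma_ratio α hα N, inv_div]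
  have h2 : ∀ j, Real.Gamma (φ j * α + n j) / Real.Gamma (φ j * α) =
      ∑ t : Fin (n j + 1), (stirling1 (n j) (t : ℕ) : ℝ) * (φ j * α) ^ (t : ℕ) := by
    intro j
    rw [gamma_ratio (φ j * α) (mul_pos (hφ j) hα) (n j), asc_eq_sum,
      Fin.sum_univ_eq_sum_range (fun t => (stirling1 (n j) t : ℝ) * (φ j * α) ^ t)]
  rw [h1]
  simp only [h2]
  rw [Finset.prod_univ_sum, Finset.mul_sum, Fintype.piFinset_univ]
  rw [Finset.sum_filter]
  apply Finset.sum_congr rfl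
  intro t _
  by_cases hp : ∀ j, if n j = 0 then (t j : ℕ) = 0 else 1 ≤ (t j : ℕ)
  · rw [if_pos hp]
    have : ∀ j, (stirling1 (n j) (t j) : ℝ) * (φ j * α) ^ (t j : ℕ)
        = (φ j ^ (t j : ℕ) * (stirling1 (n j) (t j) : ℝ)) * α ^ (t j : ℕ) := by
      intro j; rw [mul_pow]; ring
    rw [Finset.prod_congr rfl (fun j _ => this j), Finset.prod_mul_distrib,
      Finset.prod_pow_eq_pow_sum]
    field_simp
  · rw [if_neg hp]
    push_neg at hp
    obtain ⟨j, hj⟩ := hp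
    have hlt := (t j).isLt
    have hnj : n j ≠ 0 := by
      intro h
      rw [if_pos h] at hj
      exact hj (by omega)
    rw [if_neg hnj] at hj
    have htj : (t j : ℕ) = 0 := by omega
    have : (stirling1 (n j) (t j) : ℝ) = 0 := by
      rw [htj]
      cases hn : n j with
      | zero => exact absurd hn hnj
      | succ p => simp [stirling1]
    apply mul_eq_zero_of_right
    apply Finset.prod_eq_zero (Finset.mem_univ j)
    rw [this, zero_mul]
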